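/- Let I_0 be an ideal of K{X}°, f ∈ K{X}°, I = I_0 + ⟨f⟩, and M = {(u,v) ∈ K{X}° × K{X}° : uf - v ∈ I_0}. If G is a strong Gröbner basis of M, then {v : (u,v) ∈ G for some u} is a Gröbner basis of I. -/

import Mathlib

open MvPowerSeries

namespace TateStmt

variable {n : ℕ} {O : Type*} [CommRing O]

/-- The Tate condition: the (π-adic) valuations of the coefficients tend to infinity. -/
def IsTate (π : O) (f : MvPowerSeries (Fin n) O) : Prop :=
  ∀ N : ℕ, {i : Fin n →₀ ℕ | ¬ π ^ N ∣ MvPowerSeries.coeff i f}.Finite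

/-- The integral Tate algebra `K{X}°`, as a subring of the ring of formal power series
over the valuation ring `O = K°`. -/
def TateAlgebra (n : ℕ) (O : Type*) [CommRing O] (π : O) :
    Subring (MvPowerSeries (Fin n) O) where
  carrier := {f | IsTate π f}
  zero_mem' := by
    intro N
    apply Set.Finite.subset (Set.finite_empty)
    intro i hi
    exact hi (Dvd.intro 0 (by simp))
  one_mem' := by
    intro N
    apply Set.Finite.subset (Set.finite_singleton (0 : Fin n →₀ ℕ))
    intro i hi
    by_contra h
    rw [Set.mem_singleton_iff] at h
    apply hi
    rw [MvPowerSeries.coeff_one, if_neg h]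
    exact Dvd.intro 0 (by simp)
  add_mem' := by
    intro f g hf hg N
    apply Set.Finite.subset ((hf N).union (hg N))
    intro i hi
    by_contra h
    simp only [Set.mem_union, Set.mem_setOf_eq, not_or, not_not] at h
    exact hi (by rw [map_add]; exact dvd_add h.1 h.2)
  neg_mem' := by
    intro f hf N
    apply Set.Finite.subset (hf N)
    intro i hi
    by_contra h
    simp only [Set.mem_setOf_eq, not_not] at h
    exact hi (by rw [map_neg]; exact (dvd_neg).mpr h)
  mul_mem' := by
    intro f g hf hg N
    apply Set.Finite.subset (Set.Finite.add (hf N) (hg N))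
    intro i hi
    by_contra h
    apply hi
    rw [MvPowerSeries.coeff_mul]
    apply Finset.dvd_sum
    intro p hp
    rw [Finset.HasAntidiagonal.mem_antidiagonal] at hp
    by_cases h1 : π ^ N ∣ MvPowerSeries.coeff p.1 f
    · exact Dvd.dvd.mul_right h1 _
    · by_cases h2 : π ^ N ∣ MvPowerSeries.coeff p.2 g
      · exact Dvd.dvd.mul_left h2 _
      · exact absurd (hp ▸ Set.add_mem_add h1 h2) h

/-- Tate monomials `π^a X^i`, identified with pairs `(a, i) ∈ ℕ × ℕ^n`. -/
abbrev TMon (n : ℕ) := ℕ × (Fin n →₀ ℕ)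

noncomputable def monMul (a b : TMon n) : TMon n := (a.1 + b.1, a.2 + b.2)
def monDvd (a b : TMon n) : Prop := a.1 ≤ b.1 ∧ a.2 ≤ b.2
noncomputable def monDiv (a b : TMon n) : TMon n := (a.1 - b.1, a.2 - b.2)
noncomputable def monLcm (a b : TMon n) : TMon n := (max a.1 b.1, a.2 ⊔ b.2)

/-- The valuation-first term order: compare valuations first (a *smaller* valuation gives a
*larger* term), then exponents via the monomial order `mo`. -/
def termLT (mo : MonomialOrder (Fin n)) (a b : TMon n) : Prop :=
  b.1 < a.1 ∨ (a.1 = b.1 ∧ mo.toSyn a.2 < mo.toSyn b.2)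

def termLE (mo : MonomialOrder (Fin n)) (a b : TMon n) : Prop :=
  a = b ∨ termLT mo a b

/-- Order on `Option (TMon n)`, where `none` (the "monomial" of `0`) is smallest. -/
def optLT (mo : MonomialOrder (Fin n)) : Option (TMon n) → Option (TMon n) → Prop
  | none, none => False
  | none, some _ => True
  | some _, none => False
  | some a, some b => termLT mo a b

def optLE (mo : MonomialOrder (Fin n)) (a b : Option (TMon n)) : Prop :=
  a = b ∨ optLT mo a b

noncomputable def optMul (t : TMon n) : Option (TMon n) → Option (TMon n)
  | none => none
  | some a => some (monMul t a)

/-- `(a, i)` is (the monomial of) a term of `f`: the coefficient of `X^i` has valuation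
exactly `a`. -/
def IsTerm (π : O) (f : MvPowerSeries (Fin n) O) (m : TMon n) : Prop :=
  π ^ m.1 ∣ MvPowerSeries.coeff m.2 f ∧ ¬ π ^ (m.1 + 1) ∣ MvPowerSeries.coeff m.2 f

/-- `m` is the leading monomial of `f`. -/
def IsLM (π : O) (mo : MonomialOrder (Fin n)) (f : MvPowerSeries (Fin n) O) (m : TMon n) :
    Prop :=
  IsTerm π f m ∧ ∀ m', IsTerm π f m' → termLE mo m' m

/-- `s` is the leading monomial of `f`, with the convention `LM 0 = none`. -/
def IsLMopt (π : O) (mo : MonomialOrder (Fin n)) (f : MvPowerSeries (Fin n) O) :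
    Option (TMon n) → Prop
  | none => f = 0
  | some m => IsLM π mo f m

/-- All coefficients of `f` are divisible by `π^N`, i.e. `val f ≥ N`. -/
def DvdAll (π : O) (N : ℕ) (f : MvPowerSeries (Fin n) O) : Prop :=
  ∀ i, π ^ N ∣ MvPowerSeries.coeff i f

/-- The Gauss valuation of `f` is exactly `N`. -/
def ValEq (π : O) (f : MvPowerSeries (Fin n) O) (N : ℕ) : Prop :=
  DvdAll π N f ∧ ¬ DvdAll π (N + 1) f

/-- `G` is a Gröbner basis of the ideal `I` of the (integral) Tate algebra. -/
def IsGB (π : O) (mo : MonomialOrder (Fin n)) (G : Set (TateAlgebra n O π))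
    (I : Ideal (TateAlgebra n O π)) : Prop :=
  (∀ g ∈ G, g ∈ I) ∧
    ∀ f ∈ I, (f : MvPowerSeries (Fin n) O) ≠ 0 → ∀ mf,
      IsLM π mo (f : MvPowerSeries (Fin n) O) mf →
        ∃ g ∈ G, ∃ mg, IsLM π mo (g : MvPowerSeries (Fin n) O) mg ∧ monDvd mg mf

/-- The module `M = {(u,v) : u f - v ∈ I₀}`. -/
def SigMod {π : O} (I0 : Ideal (TateAlgebra n O π)) (f : TateAlgebra n O π) :
    Set (TateAlgebra n O π × TateAlgebra n O π) :=
  {p | p.1 * f - p.2 ∈ I0}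

/-- `p = (u₁,v₁)` is top-reducible by `q = (u₂,v₂)`. -/
def TopRed (π : O) (mo : MonomialOrder (Fin n))
    (p q : TateAlgebra n O π × TateAlgebra n O π) : Prop :=
  (q.2 = 0 ∧ ∃ mu mq, IsLM π mo (p.1 : MvPowerSeries (Fin n) O) mu ∧
      IsLM π mo (q.1 : MvPowerSeries (Fin n) O) mq ∧ monDvd mq mu)
  ∨ (p.2 ≠ 0 ∧ q.2 ≠ 0 ∧
      ∃ m1 m2, IsLM π mo (p.2 : MvPowerSeries (Fin n) O) m1 ∧
        IsLM π mo (q.2 : MvPowerSeries (Fin n) O) m2 ∧ monDvd m2 m1 ∧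
        ∃ s1 s2, IsLMopt π mo (p.1 : MvPowerSeries (Fin n) O) s1 ∧
          IsLMopt π mo (q.1 : MvPowerSeries (Fin n) O) s2 ∧
          optLE mo (optMul (monDiv m1 m2) s2) s1)

/-- `G` is a strong Gröbner basis of the module `M = SigMod I0 f`. -/
def IsSGB (π : O) (mo : MonomialOrder (Fin n)) (I0 : Ideal (TateAlgebra n O π))
    (f : TateAlgebra n O π) (G : Set (TateAlgebra n O π × TateAlgebra n O π)) : Prop :=
  G.Finite ∧ G ⊆ SigMod I0 f ∧
    ∀ p ∈ SigMod I0 f, p ≠ 0 → ∃ q ∈ G, TopRed π mo p q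

/-- `p` is covered by `q`. -/
def Covers (π : O) (mo : MonomialOrder (Fin n))
    (q p : TateAlgebra n O π × TateAlgebra n O π) : Prop :=
  ∃ mu mq, IsLM π mo (p.1 : MvPowerSeries (Fin n) O) mu ∧
    IsLM π mo (q.1 : MvPowerSeries (Fin n) O) mq ∧ monDvd mq mu ∧
    ∃ sv sp, IsLMopt π mo (q.2 : MvPowerSeries (Fin n) O) sv ∧
      IsLMopt π mo (p.2 : MvPowerSeries (Fin n) O) sp ∧
      optLT mo (optMul (monDiv mu mq) sv) sp

def CoveredBy (π : O) (mo : MonomialOrder (Fin n))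
    (p : TateAlgebra n O π × TateAlgebra n O π)
    (G : Set (TateAlgebra n O π × TateAlgebra n O π)) : Prop :=
  ∃ q ∈ G, Covers π mo q p

/-- The Tate series `π^a X^i`, as an element of the Tate algebra. -/
noncomputable def monTA (π : O) (m : TMon n) : TateAlgebra n O π :=
  ⟨MvPowerSeries.monomial m.2 (π ^ m.1), by
    intro N
    apply Set.Finite.subset (Set.finite_singleton m.2)
    intro i hi
    by_contra h
    rw [Set.mem_singleton_iff] at h
    apply hi
    rw [MvPowerSeries.coeff_monomial, if_neg h]
    exact Dvd.intro 0 (by simp)⟩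

noncomputable def smulPair (π : O) (m : TMon n) (p : TateAlgebra n O π × TateAlgebra n O π) :
    TateAlgebra n O π × TateAlgebra n O π :=
  (monTA π m * p.1, monTA π m * p.2)

/-- `r` is the J-pair of `(p, q)` (with `p` carrying the larger signature part). -/
def IsJPair (π : O) (mo : MonomialOrder (Fin n))
    (p q r : TateAlgebra n O π × TateAlgebra n O π) : Prop :=
  ∃ m1 m2, IsLM π mo (p.2 : MvPowerSeries (Fin n) O) m1 ∧
    IsLM π mo (q.2 : MvPowerSeries (Fin n) O) m2 ∧
    (∃ s1 s2, IsLMopt π mo (p.1 : MvPowerSeries (Fin n) O) s1 ∧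
      IsLMopt π mo (q.1 : MvPowerSeries (Fin n) O) s2 ∧
      optLT mo (optMul (monDiv (monLcm m1 m2) m2) s2)
        (optMul (monDiv (monLcm m1 m2) m1) s1)) ∧
    r = smulPair π (monDiv (monLcm m1 m2) m1) p

section Residue

variable {k : Type*} [Field k]

/-- `P = ρ(f)`, the reduction mod `π` of `π^{-val f} f`. -/
def IsRho (π : O) (φ : O →+* k) (f : MvPowerSeries (Fin n) O)
    (P : MvPolynomial (Fin n) k) : Prop :=
  ∃ (N : ℕ) (g : MvPowerSeries (Fin n) O), f = (π ^ N) • g ∧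
    (∃ i, ¬ π ∣ MvPowerSeries.coeff i g) ∧
    ∀ i, MvPolynomial.coeff i P = φ (MvPowerSeries.coeff i g)

def rhoSet (π : O) (φ : O →+* k) (S : Set (TateAlgebra n O π)) :
    Set (MvPolynomial (Fin n) k) :=
  {P | ∃ f ∈ S, IsRho π φ (f : MvPowerSeries (Fin n) O) P}

/-- `Ī_N`: the image in `k[X]` of `π^{-N} (I ∩ π^N K{X}°)`. -/
def BarIdeal (π : O) (φ : O →+* k) (I : Ideal (TateAlgebra n O π)) (N : ℕ) :
    Set (MvPolynomial (Fin n) k) :=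
  {P | ∃ f ∈ I, ∃ g : MvPowerSeries (Fin n) O, (f : MvPowerSeries (Fin n) O) = (π ^ N) • g ∧
    ∀ i, MvPolynomial.coeff i P = φ (MvPowerSeries.coeff i g)}

/-- `d` is the leading exponent of the polynomial `P` for the monomial order `mo`. -/
def IsPolyLM (mo : MonomialOrder (Fin n)) (P : MvPolynomial (Fin n) k)
    (d : Fin n →₀ ℕ) : Prop :=
  MvPolynomial.coeff d P ≠ 0 ∧ ∀ e, MvPolynomial.coeff e P ≠ 0 → mo.toSyn e ≤ mo.toSyn d

/-- `G` is a Gröbner basis of the set (ideal) `J` of polynomials over the residue field. -/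
def IsPolyGB (mo : MonomialOrder (Fin n)) (G : Set (MvPolynomial (Fin n) k))
    (J : Set (MvPolynomial (Fin n) k)) : Prop :=
  G ⊆ J ∧ ∀ P ∈ J, P ≠ 0 → ∀ d, IsPolyLM mo P d →
    ∃ Q ∈ G, ∃ e, IsPolyLM mo Q e ∧ e ≤ d

end Residue

end TateStmt


open TateStmt MvPowerSeries

variable {n : ℕ} {O : Type*} [CommRing O] [IsDomain O] [IsDiscreteValuationRing O]

namespace SGBAux

set_option linter.unusedSectionVars false

open TateStmt MvPowerSeries

variable {n : ℕ} {O : Type*} [CommRing O] [IsDomain O] [IsDiscreteValuationRing O]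

lemma le_of_pow_dvd {π c : O} {a b : ℕ} (h1 : π ^ a ∣ c) (h2 : ¬ π ^ (b + 1) ∣ c) :
    a ≤ b := by
  by_contra h
  exact h2 ((pow_dvd_pow π (by omega)).trans h1)

lemma exists_exact_val {π : O} (hπ : Irreducible π) {c : O} (hc : c ≠ 0) :
    ∃ a : ℕ, π ^ a ∣ c ∧ ¬ π ^ (a + 1) ∣ c := by
  obtain ⟨a, u, rfl⟩ := IsDiscreteValuationRing.eq_unit_mul_pow_irreducible hc hπ
  refine ⟨a, Dvd.intro _ (mul_comm _ _), ?_⟩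
  rintro ⟨d, hd⟩
  have hπ0 : (π : O) ^ a ≠ 0 := pow_ne_zero _ hπ.ne_zero
  have hud : (u : O) = π * d := by
    apply mul_left_cancel₀ hπ0
    rw [mul_comm ((π : O) ^ a) ((u : O)), hd, pow_succ]
    ring
  exact hπ.not_isUnit (isUnit_of_dvd_unit ⟨d, hud⟩ u.isUnit)

lemma isUnit_of_not_dvd {π : O} (hπ : Irreducible π) {w : O} (h : ¬ π ∣ w) : IsUnit w := by
  by_contra hw
  have hmem : w ∈ IsLocalRing.maximalIdeal O := (IsLocalRing.mem_maximalIdeal _).mpr hw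
  rw [hπ.maximalIdeal_eq, Ideal.mem_span_singleton] at hmem
  exact h hmem

/-- The bound exponent for "all terms are `≤ (a, e)`". -/
noncomputable def bnd (mo : MonomialOrder (Fin n)) (a : ℕ) (e : Fin n →₀ ℕ) (i : Fin n →₀ ℕ) : ℕ :=
  if mo.toSyn i ≤ mo.toSyn e then a else a + 1

/-- The bound exponent for "all terms are `< (a, e)` (or have larger valuation)". -/
noncomputable def sbnd (mo : MonomialOrder (Fin n)) (a : ℕ) (e : Fin n →₀ ℕ) (i : Fin n →₀ ℕ) : ℕ :=
  if mo.toSyn i < mo.toSyn e then a else a + 1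

lemma le_bnd (mo : MonomialOrder (Fin n)) (a : ℕ) (e i : Fin n →₀ ℕ) : a ≤ bnd mo a e i := by
  unfold bnd; split <;> omega

lemma bnd_dvd_of_isLM {π : O} (hπ : Irreducible π) {mo : MonomialOrder (Fin n)}
    {g : MvPowerSeries (Fin n) O} {mu : TMon n} (h : IsLM π mo g mu) (i : Fin n →₀ ℕ) :
    π ^ bnd mo mu.1 mu.2 i ∣ MvPowerSeries.coeff i g := by
  by_contra hdvd
  have hc : MvPowerSeries.coeff i g ≠ 0 := fun h0 => hdvd (h0 ▸ dvd_zero _)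
  obtain ⟨a, ha, ha'⟩ := exists_exact_val hπ hc
  have hterm : IsTerm π g (a, i) := ⟨ha, ha'⟩
  have hle := h.2 _ hterm
  unfold bnd at hdvd
  split_ifs at hdvd with hcond
  · have hamu : a < mu.1 := by
      by_contra hh
      exact hdvd ((pow_dvd_pow _ (by omega)).trans ha)
    rcases hle with heq | hlt
    · have : a = mu.1 := congrArg Prod.fst heq
      omega
    · rcases hlt with h' | ⟨h', _⟩ <;> omega
  · have hamu : a ≤ mu.1 := by
      by_contra hh
      exact hdvd ((pow_dvd_pow _ (by omega)).trans ha)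
    rcases hle with heq | hlt
    · have : i = mu.2 := congrArg Prod.snd heq
      exact hcond (le_of_eq (congrArg mo.toSyn this))
    · rcases hlt with h' | ⟨h', h''⟩
      · omega
      · exact hcond (le_of_lt h'')

lemma base_dvd_of_isLM {π : O} (hπ : Irreducible π) {mo : MonomialOrder (Fin n)}
    {g : MvPowerSeries (Fin n) O} {mu : TMon n} (h : IsLM π mo g mu) (i : Fin n →₀ ℕ) :
    π ^ mu.1 ∣ MvPowerSeries.coeff i g :=
  (pow_dvd_pow π (le_bnd mo mu.1 mu.2 i)).trans (bnd_dvd_of_isLM hπ h i)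

lemma isLM_of_bnd {π : O} {mo : MonomialOrder (Fin n)}
    {g : MvPowerSeries (Fin n) O} {mu : TMon n}
    (hb : ∀ i, π ^ bnd mo mu.1 mu.2 i ∣ MvPowerSeries.coeff i g)
    (htop : ¬ π ^ (mu.1 + 1) ∣ MvPowerSeries.coeff mu.2 g) :
    IsLM π mo g mu := by
  constructor
  · exact ⟨by simpa [bnd] using hb mu.2, htop⟩
  · rintro ⟨a, i⟩ ⟨hd, hnd⟩
    have h1 := hb i
    unfold bnd at h1
    split_ifs at h1 with hcond
    · have hle : mu.1 ≤ a := le_of_pow_dvd h1 hnd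
      rcases eq_or_lt_of_le hle with heq | hlt
      · by_cases hi : i = mu.2
        · left
          exact Prod.ext heq.symm hi
        · right
          exact Or.inr ⟨heq.symm, lt_of_le_of_ne hcond (fun hh => hi (mo.toSyn.injective hh))⟩
      · exact Or.inr (Or.inl hlt)
    · have hle : mu.1 + 1 ≤ a := le_of_pow_dvd h1 hnd
      exact Or.inr (Or.inl (by omega))

lemma not_isLM_zero {π : O} {mo : MonomialOrder (Fin n)} {mu : TMon n} :
    ¬ IsLM π mo (0 : MvPowerSeries (Fin n) O) mu :=
  fun h => h.1.2 (by simp)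

lemma isLM_unique {π : O} {mo : MonomialOrder (Fin n)}
    {g : MvPowerSeries (Fin n) O} {m1 m2 : TMon n}
    (h1 : IsLM π mo g m1) (h2 : IsLM π mo g m2) : m1 = m2 := by
  have a := h1.2 _ h2.1
  have b := h2.2 _ h1.1
  rcases a with h | h
  · exact h.symm
  · rcases b with h' | h'
    · exact h'
    · exfalso
      rcases h with hh | ⟨hh1, hh2⟩ <;> rcases h' with hh' | ⟨hh1', hh2'⟩
      · omega
      · omega
      · omega
      · exact lt_asymm hh2 hh2'

lemma exists_isLM {π : O} (hπ : Irreducible π) (mo : MonomialOrder (Fin n))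
    (g : TateAlgebra n O π) (hg : (g : MvPowerSeries (Fin n) O) ≠ 0) :
    ∃ mu, IsLM π mo (g : MvPowerSeries (Fin n) O) mu := by
  have hex : ∃ i, MvPowerSeries.coeff i (g : MvPowerSeries (Fin n) O) ≠ 0 := by
    by_contra hh
    push_neg at hh
    exact hg (MvPowerSeries.ext fun i => by rw [hh i, map_zero])
  obtain ⟨i1, hi1⟩ := hex
  set S : Set ℕ := {a | ∃ i, ¬ π ^ (a + 1) ∣ MvPowerSeries.coeff i (g : MvPowerSeries (Fin n) O)}
    with hS
  have hSne : S.Nonempty := by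
    obtain ⟨a, _, ha'⟩ := exists_exact_val hπ hi1
    exact ⟨a, i1, ha'⟩
  set a0 := sInf S with ha0
  have hmem0 : a0 ∈ S := Nat.sInf_mem hSne
  rw [hS, Set.mem_setOf_eq] at hmem0
  obtain ⟨i0', hi0'⟩ := hmem0
  have hall : ∀ i, π ^ a0 ∣ MvPowerSeries.coeff i (g : MvPowerSeries (Fin n) O) := by
    intro i
    rcases Nat.eq_zero_or_pos a0 with h0 | h0
    · rw [h0, pow_zero]; exact one_dvd _
    · have hb : a0 - 1 ∉ S := Nat.notMem_of_lt_sInf (by omega)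
      rw [hS, Set.mem_setOf_eq] at hb
      push_neg at hb
      have := hb i
      rwa [show a0 - 1 + 1 = a0 by omega] at this
  have hfin : {i | ¬ π ^ (a0 + 1) ∣ MvPowerSeries.coeff i (g : MvPowerSeries (Fin n) O)}.Finite :=
    g.2 (a0 + 1)
  have hTne : hfin.toFinset.Nonempty := by
    refine ⟨i0', ?_⟩
    simpa [Set.Finite.mem_toFinset] using hi0'
  obtain ⟨i0, hi0T, hmax⟩ := hfin.toFinset.exists_max_image (fun i => mo.toSyn i) hTne
  rw [Set.Finite.mem_toFinset, Set.mem_setOf_eq] at hi0T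
  refine ⟨(a0, i0), isLM_of_bnd ?_ hi0T⟩
  intro i
  unfold bnd
  split_ifs with hcond
  · exact hall i
  · by_contra hdvd
    exact hcond (hmax i (by simpa [Set.Finite.mem_toFinset] using hdvd))

lemma dvdAll_mul_right {π : O} {N : ℕ} {a b : MvPowerSeries (Fin n) O}
    (h : DvdAll π N a) : DvdAll π N (a * b) := by
  intro i
  rw [MvPowerSeries.coeff_mul]
  exact Finset.dvd_sum fun p _ => (h p.1).mul_right _

/-- A single Tate term `c · π^{m.1} · X^{m.2}`. -/
noncomputable def termTA (π : O) (c : O) (m : TMon n) : TateAlgebra n O π :=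
  ⟨MvPowerSeries.monomial m.2 (c * π ^ m.1), by
    intro N
    apply Set.Finite.subset (Set.finite_singleton m.2)
    intro i hi
    by_contra h
    rw [Set.mem_singleton_iff] at h
    apply hi
    rw [MvPowerSeries.coeff_monomial, if_neg h]
    exact Dvd.intro 0 (by simp)⟩

lemma reduce {π : O} (hπ : Irreducible π) (mo : MonomialOrder (Fin n))
    {u q1 : TateAlgebra n O π} {mu mq : TMon n}
    (hu : IsLM π mo (u : MvPowerSeries (Fin n) O) mu)
    (hq : IsLM π mo (q1 : MvPowerSeries (Fin n) O) mq)
    (hd : monDvd mq mu) :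
    ∃ t : TateAlgebra n O π, ∀ i,
      π ^ sbnd mo mu.1 mu.2 i ∣
        MvPowerSeries.coeff i ((u - t * q1 : TateAlgebra n O π) : MvPowerSeries (Fin n) O) := by
  obtain ⟨w1, hw1⟩ := hu.1.1
  obtain ⟨w2, hw2⟩ := hq.1.1
  have hw1' : ¬ π ∣ w1 := by
    rintro ⟨d, hd'⟩
    exact hu.1.2 ⟨d, by rw [hw1, hd', pow_succ]; ring⟩
  have hw2' : ¬ π ∣ w2 := by
    rintro ⟨d, hd'⟩
    exact hq.1.2 ⟨d, by rw [hw2, hd', pow_succ]; ring⟩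
  have hv2 := isUnit_of_not_dvd hπ hw2'
  set v2 := hv2.unit with hv2def
  have hv2spec : (v2 : O) = w2 := hv2.unit_spec
  set m : TMon n := monDiv mu mq with hm
  have hm1 : m.1 + mq.1 = mu.1 := by
    have h1 := hd.1
    simp only [hm, monDiv]
    omega
  have hm2 : m.2 + mq.2 = mu.2 := by
    simp only [hm, monDiv]
    exact tsub_add_cancel_of_le hd.2
  set c : O := w1 * ((v2⁻¹ : Oˣ) : O) with hc
  refine ⟨termTA π c m, ?_⟩
  intro i
  have hcoe : ((u - termTA π c m * q1 : TateAlgebra n O π) : MvPowerSeries (Fin n) O)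
      = (u : MvPowerSeries (Fin n) O)
        - (MvPowerSeries.monomial m.2 (c * π ^ m.1)) * (q1 : MvPowerSeries (Fin n) O) := rfl
  rw [hcoe, map_sub, MvPowerSeries.coeff_monomial_mul]
  by_cases hgt : mo.toSyn mu.2 < mo.toSyn i
  · have hsb : sbnd mo mu.1 mu.2 i = mu.1 + 1 := by
      unfold sbnd
      rw [if_neg (not_lt.mpr (le_of_lt hgt))]
    rw [hsb]
    apply dvd_sub
    · have hb := bnd_dvd_of_isLM hπ hu i
      rwa [bnd, if_neg (not_le.mpr hgt)] at hb
    · split_ifs with hle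
      · have hkey : mo.toSyn mq.2 < mo.toSyn (i - m.2) := by
          have hadd : (i - m.2) + m.2 = i := tsub_add_cancel_of_le hle
          have h1 : mo.toSyn mq.2 + mo.toSyn m.2 < mo.toSyn (i - m.2) + mo.toSyn m.2 := by
            rw [← map_add, ← map_add, hadd, add_comm mq.2 m.2, hm2]
            exact hgt
          exact lt_of_add_lt_add_right h1
        have hb := bnd_dvd_of_isLM hπ hq (i - m.2)
        rw [bnd, if_neg (not_le.mpr hkey)] at hb
        obtain ⟨d, hd'⟩ := hb
        refine ⟨c * d, ?_⟩
        rw [hd', show mu.1 + 1 = m.1 + (mq.1 + 1) by omega, pow_add]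
        ring
      · exact dvd_zero _
  · rcases eq_or_lt_of_le (not_lt.mp hgt) with heq | hlt
    · have hi : i = mu.2 := mo.toSyn.injective heq
      subst hi
      have hle : m.2 ≤ mu.2 := by
        rw [← hm2]
        exact le_self_add
      rw [if_pos hle]
      have hsub : mu.2 - m.2 = mq.2 := by
        rw [← hm2, add_comm, add_tsub_cancel_right]
      rw [hsub, hw1, hw2, ← hv2spec]
      have hzero : c * π ^ m.1 * (π ^ mq.1 * (v2 : O)) = π ^ mu.1 * w1 := by
        rw [hc]
        have hvv : ((v2⁻¹ : Oˣ) : O) * (v2 : O) = 1 := v2.inv_mul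
        calc w1 * ((v2⁻¹ : Oˣ) : O) * π ^ m.1 * (π ^ mq.1 * (v2 : O))
            = (π ^ m.1 * π ^ mq.1) * w1 * (((v2⁻¹ : Oˣ) : O) * (v2 : O)) := by ring
          _ = π ^ mu.1 * w1 := by rw [hvv, mul_one, ← pow_add, hm1]
      rw [hzero, sub_self]
      exact dvd_zero _
    · have hsb : sbnd mo mu.1 mu.2 i = mu.1 := by
        unfold sbnd
        rw [if_pos hlt]
      rw [hsb]
      apply dvd_sub
      · exact base_dvd_of_isLM hπ hu i
      · split_ifs with hle
        · obtain ⟨d, hd'⟩ := base_dvd_of_isLM hπ hq (i - m.2)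
          refine ⟨c * d, ?_⟩
          rw [hd', ← hm1, pow_add]
          ring
        · exact dvd_zero _

lemma descend {π : O} (hπ : Irreducible π) (mo : MonomialOrder (Fin n))
    {I0 : Ideal (TateAlgebra n O π)} {f g : TateAlgebra n O π}
    (hred : ∀ u : TateAlgebra n O π, u * f - g ∈ I0 →
      ∀ mu, IsLM π mo (u : MvPowerSeries (Fin n) O) mu →
        ∃ q1 : TateAlgebra n O π, q1 * f ∈ I0 ∧
          ∃ mq, IsLM π mo (q1 : MvPowerSeries (Fin n) O) mq ∧ monDvd mq mu)
    (j : ℕ) (s : mo.syn) :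
    ∀ u : TateAlgebra n O π, u * f - g ∈ I0 →
      (∀ i, π ^ (if mo.toSyn i < s then j else j + 1) ∣
        MvPowerSeries.coeff i (u : MvPowerSeries (Fin n) O)) →
      ∃ u' : TateAlgebra n O π, u' * f - g ∈ I0 ∧
        DvdAll π (j + 1) (u' : MvPowerSeries (Fin n) O) := by
  induction s using WellFoundedLT.induction with
  | _ s IH =>
  intro u huI hub
  by_cases hdone : DvdAll π (j + 1) (u : MvPowerSeries (Fin n) O)
  · exact ⟨u, huI, hdone⟩
  · have hex : ∃ i, ¬ π ^ (j + 1) ∣ MvPowerSeries.coeff i (u : MvPowerSeries (Fin n) O) := by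
      by_contra hh
      push_neg at hh
      exact hdone hh
    obtain ⟨i1, hi1⟩ := hex
    have hune : (u : MvPowerSeries (Fin n) O) ≠ 0 := by
      intro h0
      exact hi1 (by rw [h0, map_zero]; exact dvd_zero _)
    obtain ⟨mu, hmu⟩ := exists_isLM hπ mo u hune
    have hj : ∀ i, π ^ j ∣ MvPowerSeries.coeff i (u : MvPowerSeries (Fin n) O) := by
      intro i
      refine (pow_dvd_pow π ?_).trans (hub i)
      split <;> omega
    have hmuj : mu.1 = j := by
      have h1 : j ≤ mu.1 := le_of_pow_dvd (hj mu.2) hmu.1.2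
      have hterm : IsTerm π (u : MvPowerSeries (Fin n) O) (j, i1) := ⟨hj i1, hi1⟩
      have h2 := hmu.2 _ hterm
      rcases h2 with heq | hlt
      · exact (congrArg Prod.fst heq).symm
      · rcases hlt with h' | ⟨h', _⟩ <;> omega
    have hmus : mo.toSyn mu.2 < s := by
      by_contra hns
      have h3 := hub mu.2
      rw [if_neg hns] at h3
      exact hmu.1.2 (by rwa [hmuj])
    obtain ⟨q1, hq1I, mq, hq1LM, hdq⟩ := hred u huI mu hmu
    obtain ⟨t, ht⟩ := reduce hπ mo hmu hq1LM hdq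
    have hI' : (u - t * q1) * f - g ∈ I0 := by
      have heq : (u - t * q1) * f - g = (u * f - g) - t * (q1 * f) := by ring
      rw [heq]
      exact Ideal.sub_mem _ huI (Ideal.mul_mem_left _ _ hq1I)
    refine IH (mo.toSyn mu.2) hmus (u - t * q1) hI' ?_
    intro i
    have h3 := ht i
    unfold sbnd at h3
    rwa [hmuj] at h3

lemma step {π : O} (hπ : Irreducible π) (mo : MonomialOrder (Fin n))
    {I0 : Ideal (TateAlgebra n O π)} {f g : TateAlgebra n O π}
    (hred : ∀ u : TateAlgebra n O π, u * f - g ∈ I0 →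
      ∀ mu, IsLM π mo (u : MvPowerSeries (Fin n) O) mu →
        ∃ q1 : TateAlgebra n O π, q1 * f ∈ I0 ∧
          ∃ mq, IsLM π mo (q1 : MvPowerSeries (Fin n) O) mq ∧ monDvd mq mu)
    (j : ℕ) :
    ∀ u : TateAlgebra n O π, u * f - g ∈ I0 → DvdAll π j (u : MvPowerSeries (Fin n) O) →
      ∃ u' : TateAlgebra n O π, u' * f - g ∈ I0 ∧
        DvdAll π (j + 1) (u' : MvPowerSeries (Fin n) O) := by
  intro u huI huD
  by_cases hdone : DvdAll π (j + 1) (u : MvPowerSeries (Fin n) O)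
  · exact ⟨u, huI, hdone⟩
  · have hex : ∃ i, ¬ π ^ (j + 1) ∣ MvPowerSeries.coeff i (u : MvPowerSeries (Fin n) O) := by
      by_contra hh
      push_neg at hh
      exact hdone hh
    obtain ⟨i1, hi1⟩ := hex
    have hune : (u : MvPowerSeries (Fin n) O) ≠ 0 := by
      intro h0
      exact hi1 (by rw [h0, map_zero]; exact dvd_zero _)
    obtain ⟨mu, hmu⟩ := exists_isLM hπ mo u hune
    have hmuj : mu.1 = j := by
      have h1 : j ≤ mu.1 := le_of_pow_dvd (huD mu.2) hmu.1.2
      have hterm : IsTerm π (u : MvPowerSeries (Fin n) O) (j, i1) := ⟨huD i1, hi1⟩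
      have h2 := hmu.2 _ hterm
      rcases h2 with heq | hlt
      · exact (congrArg Prod.fst heq).symm
      · rcases hlt with h' | ⟨h', _⟩ <;> omega
    obtain ⟨q1, hq1I, mq, hq1LM, hdq⟩ := hred u huI mu hmu
    obtain ⟨t, ht⟩ := reduce hπ mo hmu hq1LM hdq
    have hI' : (u - t * q1) * f - g ∈ I0 := by
      have heq : (u - t * q1) * f - g = (u * f - g) - t * (q1 * f) := by ring
      rw [heq]
      exact Ideal.sub_mem _ huI (Ideal.mul_mem_left _ _ hq1I)
    refine descend hπ mo hred j (mo.toSyn mu.2) (u - t * q1) hI' ?_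
    intro i
    have h3 := ht i
    unfold sbnd at h3
    rwa [hmuj] at h3

lemma climb {π : O} (hπ : Irreducible π) (mo : MonomialOrder (Fin n))
    {I0 : Ideal (TateAlgebra n O π)} {f g : TateAlgebra n O π}
    (hred : ∀ u : TateAlgebra n O π, u * f - g ∈ I0 →
      ∀ mu, IsLM π mo (u : MvPowerSeries (Fin n) O) mu →
        ∃ q1 : TateAlgebra n O π, q1 * f ∈ I0 ∧
          ∃ mq, IsLM π mo (q1 : MvPowerSeries (Fin n) O) mq ∧ monDvd mq mu)
    (N : ℕ) :
    ∀ k j, N ≤ j + k → ∀ u : TateAlgebra n O π, u * f - g ∈ I0 →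
      DvdAll π j (u : MvPowerSeries (Fin n) O) →
      ∃ u' : TateAlgebra n O π, u' * f - g ∈ I0 ∧
        DvdAll π N (u' : MvPowerSeries (Fin n) O) := by
  intro k
  induction k with
  | zero =>
    intro j hN u huI huD
    exact ⟨u, huI, fun i => (pow_dvd_pow π (by omega)).trans (huD i)⟩
  | succ k IH =>
    intro j hN u huI huD
    by_cases hjN : N ≤ j
    · exact ⟨u, huI, fun i => (pow_dvd_pow π hjN).trans (huD i)⟩
    · obtain ⟨u1, h1, h2⟩ := step hπ mo hred j u huI huD
      exact IH (j + 1) (by omega) u1 h1 h2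

end SGBAux


/-- if `G` is a strong Gröbner basis of `M = {(u,v) : u f - v ∈ I₀}`, then
`{v : (u,v) ∈ G for some u}` is a Gröbner basis of `I = I₀ + ⟨f⟩`. -/
theorem statement_6 (π : O) (hπ : Irreducible π) (mo : MonomialOrder (Fin n))
    (I0 : Ideal (TateAlgebra n O π)) (f : TateAlgebra n O π)
    (G : Set (TateAlgebra n O π × TateAlgebra n O π))
    (hSGB : IsSGB π mo I0 f G) :
    IsGB π mo {v : TateAlgebra n O π | ∃ u, (u, v) ∈ G}
      (I0 ⊔ Ideal.span {f}) := by
  obtain ⟨hGfin, hGsub, hGtop⟩ := hSGB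
  constructor
  · rintro v ⟨u, huv⟩
    have hm : u * f - v ∈ I0 := hGsub huv
    have hv : v = u * f - (u * f - v) := by ring
    rw [hv]
    refine Submodule.sub_mem _ ?_ (Ideal.mem_sup_left hm)
    exact Ideal.mem_sup_right (Ideal.mem_span_singleton.mpr (dvd_mul_left f u))
  · intro g hgI hgne mg hmg
    by_contra hcon
    push_neg at hcon
    have hred : ∀ u : TateAlgebra n O π, u * f - g ∈ I0 →
        ∀ mu, IsLM π mo (u : MvPowerSeries (Fin n) O) mu →
          ∃ q1 : TateAlgebra n O π, q1 * f ∈ I0 ∧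
            ∃ mq, IsLM π mo (q1 : MvPowerSeries (Fin n) O) mq ∧ monDvd mq mu := by
      intro u huI mu hmu
      have hp : ((u, g) : TateAlgebra n O π × TateAlgebra n O π) ∈ SigMod I0 f := huI
      have hpne : ((u, g) : TateAlgebra n O π × TateAlgebra n O π) ≠ 0 := by
        intro h0
        apply hgne
        have h1 := congrArg Prod.snd h0
        simp only at h1
        rw [h1]
        rfl
      obtain ⟨q, hqG, hTR⟩ := hGtop _ hp hpne
      rcases hTR with ⟨hq2, mu', mq, hLMu, hLMq, hdv⟩ | ⟨_, _, m1, m2, hLM1, hLM2, hdv, _⟩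
      · have heq : mu' = mu := SGBAux.isLM_unique hLMu hmu
        have hq1f : q.1 * f ∈ I0 := by
          have hs := hGsub hqG
          simp only [SigMod, Set.mem_setOf_eq, hq2, sub_zero] at hs
          exact hs
        exact ⟨q.1, hq1f, mq, hLMq, heq ▸ hdv⟩
      · exfalso
        have heq : m1 = mg := SGBAux.isLM_unique hLM1 hmg
        exact hcon q.2 ⟨q.1, hqG⟩ m2 hLM2 (heq ▸ hdv)
    obtain ⟨a, haI, b, hbF, hab⟩ := Submodule.mem_sup.mp hgI
    obtain ⟨t0, ht0⟩ := Ideal.mem_span_singleton'.mp hbF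
    have hu0 : t0 * f - g ∈ I0 := by
      have heq : t0 * f - g = -a := by rw [← hab, ← ht0]; ring
      rw [heq]
      exact neg_mem haI
    obtain ⟨u', hu'I, hu'D⟩ := SGBAux.climb hπ mo hred (mg.1 + 1) (mg.1 + 1) 0 (by omega) t0 hu0
      (fun i => by rw [pow_zero]; exact one_dvd _)
    have hprod : DvdAll π (mg.1 + 1)
        ((u' : MvPowerSeries (Fin n) O) * (f : MvPowerSeries (Fin n) O)) :=
      SGBAux.dvdAll_mul_right hu'D
    have hhI : g - u' * f ∈ I0 := by
      have heq : g - u' * f = -(u' * f - g) := by ring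
      rw [heq]
      exact neg_mem hu'I
    have hcoe : ((g - u' * f : TateAlgebra n O π) : MvPowerSeries (Fin n) O)
        = (g : MvPowerSeries (Fin n) O)
          - (u' : MvPowerSeries (Fin n) O) * (f : MvPowerSeries (Fin n) O) := rfl
    have hLMh : IsLM π mo ((g - u' * f : TateAlgebra n O π) : MvPowerSeries (Fin n) O) mg := by
      apply SGBAux.isLM_of_bnd
      · intro i
        rw [hcoe, map_sub]
        refine dvd_sub (SGBAux.bnd_dvd_of_isLM hπ hmg i) ?_
        refine (pow_dvd_pow π ?_).trans (hprod i)
        unfold SGBAux.bnd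
        split <;> omega
      · rw [hcoe, map_sub]
        intro hdvd
        apply hmg.1.2
        have h4 := hprod mg.2
        have h5 := dvd_add hdvd h4
        rwa [sub_add_cancel] at h5
    have hhne : ((g - u' * f : TateAlgebra n O π) : MvPowerSeries (Fin n) O) ≠ 0 := by
      intro h0
      apply hLMh.1.2
      rw [h0, map_zero]
      exact dvd_zero _
    have hpmem : (((0 : TateAlgebra n O π), g - u' * f) :
        TateAlgebra n O π × TateAlgebra n O π) ∈ SigMod I0 f := by
      show (0 : TateAlgebra n O π) * f - (g - u' * f) ∈ I0
      rw [zero_mul, zero_sub]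
      exact neg_mem hhI
    have hpne : (((0 : TateAlgebra n O π), g - u' * f) :
        TateAlgebra n O π × TateAlgebra n O π) ≠ 0 := by
      intro h0
      apply hhne
      have h1 := congrArg Prod.snd h0
      simp only at h1
      rw [h1]
      rfl
    obtain ⟨q, hqG, hTR⟩ := hGtop _ hpmem hpne
    rcases hTR with ⟨_, mu', mq, hLMu, _, _⟩ | ⟨_, _, m1, m2, hLM1, hLM2, hdv, _⟩
    · exact SGBAux.not_isLM_zero hLMu
    · have heq : m1 = mg := SGBAux.isLM_unique hLM1 hLMh
      exact hcon q.2 ⟨q.1, hqG⟩ m2 hLM2 (heq ▸ hdv)
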